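/- Let (ã_k, e_k)_{k≥2} be an i.i.d. sequence of pairs of square-integrable real random variables with E[ã_2²] < 1. Set m = E[ã_2], s = E[ã_2²], μ = E[e_2], σ² = Var(e_2), and c = E[ã_2 e_2]. Then T = Σ_{k=2}^∞ ã_2 ⋯ ã_{k-1} e_k converges in L² and E[T²] = E[e_2²]/(1 - s) + 2 c μ / ((1 - s)(1 - m)). -/

import Mathlib

open MeasureTheory ProbabilityTheory Filter Topology

lemma prod_indep_integral {Ω : Type*} [MeasurableSpace Ω] {μ : Measure Ω}
    [IsProbabilityMeasure μ] {G : ℕ → Ω → ℝ} (hGmeas : ∀ k, Measurable (G k))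
    (hGindep : iIndepFun G μ) (t : Finset ℕ)
    (hint : ∀ k ∈ t, Integrable (G k) μ) :
    Integrable (fun ω => ∏ k ∈ t, G k ω) μ ∧
      (∫ ω, ∏ k ∈ t, G k ω ∂μ) = ∏ k ∈ t, ∫ ω, G k ω ∂μ := by
  classical
  induction t using Finset.induction_on with
  | empty => simp
  | @insert i t hnot ih =>
    have hIndep : IndepFun (G i) (fun ω => ∏ k ∈ t, G k ω) μ := by
      have := (hGindep.indepFun_finset_prod_of_notMem hGmeas hnot).symm
      simpa [Finset.prod_fn] using this
    have hGi : Integrable (G i) μ := hint i (Finset.mem_insert_self i t)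
    obtain ⟨ihInt, ihVal⟩ := ih (fun k hk => hint k (Finset.mem_insert_of_mem hk))
    have hmul : Integrable (fun ω => G i ω * ∏ k ∈ t, G k ω) μ := by
      have := hIndep.integrable_mul hGi ihInt
      simpa [HMul.hMul, Mul.mul] using this
    constructor
    · simpa [Finset.prod_insert hnot] using hmul
    · rw [Finset.prod_insert hnot]
      have := hIndep.integral_mul_eq_mul_integral hGi.aestronglyMeasurable ihInt.aestronglyMeasurable
      simp only [Finset.prod_insert hnot]
      calc (∫ ω, G i ω * ∏ k ∈ t, G k ω ∂μ)
          = ∫ ω, (G i * fun ω => ∏ k ∈ t, G k ω) ω ∂μ := rfl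
        _ = (∫ ω, G i ω ∂μ) * ∫ ω, ∏ k ∈ t, G k ω ∂μ := this
        _ = _ := by rw [ihVal]

lemma integral_cs {Ω : Type*} [MeasurableSpace Ω] (μ : Measure Ω)
    {f g : Ω → ℝ} (hf2 : Integrable (fun ω => f ω ^ 2) μ)
    (hg2 : Integrable (fun ω => g ω ^ 2) μ)
    (hfg : Integrable (fun ω => f ω * g ω) μ) :
    (∫ ω, f ω * g ω ∂μ) ^ 2 ≤ (∫ ω, f ω ^ 2 ∂μ) * ∫ ω, g ω ^ 2 ∂μ := by
  set A := ∫ ω, f ω ^ 2 ∂μ with hA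
  set B := ∫ ω, f ω * g ω ∂μ with hB
  set C := ∫ ω, g ω ^ 2 ∂μ with hC
  have key : ∀ t : ℝ, 0 ≤ A + 2 * t * B + t ^ 2 * C := by
    intro t
    have i2 : Integrable (fun ω => 2 * t * (f ω * g ω)) μ := hfg.const_mul _
    have i3 : Integrable (fun ω => t ^ 2 * g ω ^ 2) μ := hg2.const_mul _
    have i12 : Integrable (fun ω => f ω ^ 2 + 2 * t * (f ω * g ω)) μ := hf2.add i2
    have h2 : 0 ≤ ∫ ω, (f ω + t * g ω) ^ 2 ∂μ := integral_nonneg fun ω => sq_nonneg _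
    have h3 : (∫ ω, (f ω + t * g ω) ^ 2 ∂μ)
        = ∫ ω, (f ω ^ 2 + 2 * t * (f ω * g ω) + t ^ 2 * g ω ^ 2) ∂μ := by
      apply integral_congr_ae; exact Filter.Eventually.of_forall fun ω => by ring
    rw [h3, integral_add i12 i3, integral_add hf2 i2, integral_const_mul,
      integral_const_mul] at h2
    linarith
  have hCpos : 0 ≤ C := integral_nonneg fun ω => sq_nonneg _
  rcases eq_or_lt_of_le hCpos with hC0 | hC0
  · have hB0 : B = 0 := by
      by_contra hBne
      have h1 := key (-(A + 1) / (2 * B))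
      have h2 : 2 * (-(A + 1) / (2 * B)) * B = -(A + 1) := by field_simp
      rw [← hC0] at h1
      nlinarith
    rw [hB0, ← hC0]; nlinarith [key 0]
  · have h1 := key (-B / C)
    have hCne : C ≠ 0 := ne_of_gt hC0
    have h2 : 2 * (-B / C) * B + (-B / C) ^ 2 * C = -(B ^ 2 / C) := by field_simp; ring
    have h3 : B ^ 2 / C ≤ A := by linarith
    exact (div_le_iff₀ hC0).mp h3

set_option maxHeartbeats 2000000 in
theorem stmt_2 {Ω : Type*} [MeasurableSpace Ω] (μ : Measure Ω) [IsProbabilityMeasure μ]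
    (a e : ℕ → Ω → ℝ)
    (hmeas : ∀ k, Measurable fun ω => (a k ω, e k ω))
    (hindep : iIndepFun (fun k ω => (a k ω, e k ω)) μ)
    (hident : ∀ k, 2 ≤ k →
      IdentDistrib (fun ω => (a k ω, e k ω)) (fun ω => (a 2 ω, e 2 ω)) μ μ)
    (hL2a : Integrable (fun ω => a 2 ω ^ 2) μ) (hL2e : Integrable (fun ω => e 2 ω ^ 2) μ)
    (m s mu s2 c : ℝ)
    (hm : (∫ ω, a 2 ω ∂μ) = m) (hs : (∫ ω, a 2 ω ^ 2 ∂μ) = s)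
    (hmu : (∫ ω, e 2 ω ∂μ) = mu)
    (hs2 : (∫ ω, (e 2 ω - mu) ^ 2 ∂μ) = s2)
    (hc : (∫ ω, a 2 ω * e 2 ω ∂μ) = c)
    (hslt : s < 1)
    (T : Ω → ℝ) (hTL2 : Integrable (fun ω => T ω ^ 2) μ)
    (hT : ∀ ω, T ω = ∑' i : ℕ, (∏ j ∈ Finset.Ico 2 (i + 2), a j ω) * e (i + 2) ω) :
    (∫ ω, T ω ^ 2 ∂μ)
      = (∫ ω, e 2 ω ^ 2 ∂μ) / (1 - s) + 2 * c * mu / ((1 - s) * (1 - m)) := by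
  classical
  set E2 := ∫ ω, e 2 ω ^ 2 ∂μ with hE2
  set X : ℕ → Ω → ℝ := fun i ω => (∏ j ∈ Finset.Ico 2 (i + 2), a j ω) * e (i + 2) ω with hXdef
  have hamea : ∀ k, Measurable (a k) := fun k => measurable_fst.comp (hmeas k)
  have hemea : ∀ k, Measurable (e k) := fun k => measurable_snd.comp (hmeas k)
  have hXmea : ∀ i, Measurable (X i) := fun i =>
    (Finset.measurable_prod _ fun j _ => hamea j).mul (hemea _)
  -- basic integrabilities at index 2
  have hIa : Integrable (a 2) μ := by
    refine ((integrable_const (1:ℝ)).add hL2a).mono' (hamea 2).aestronglyMeasurable ?_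
    refine Filter.Eventually.of_forall fun ω => ?_
    simp only [Real.norm_eq_abs, Pi.add_apply]
    nlinarith [sq_nonneg (|a 2 ω| - 1), sq_abs (a 2 ω), abs_nonneg (a 2 ω)]
  have hIe : Integrable (e 2) μ := by
    refine ((integrable_const (1:ℝ)).add hL2e).mono' (hemea 2).aestronglyMeasurable ?_
    refine Filter.Eventually.of_forall fun ω => ?_
    simp only [Real.norm_eq_abs, Pi.add_apply]
    nlinarith [sq_nonneg (|e 2 ω| - 1), sq_abs (e 2 ω), abs_nonneg (e 2 ω)]
  have hIae : Integrable (fun ω => a 2 ω * e 2 ω) μ := by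
    refine (hL2a.add hL2e).mono' ((hamea 2).mul (hemea 2)).aestronglyMeasurable ?_
    refine Filter.Eventually.of_forall fun ω => ?_
    simp only [Real.norm_eq_abs, abs_mul, Pi.add_apply]
    nlinarith [sq_nonneg (|a 2 ω| - |e 2 ω|), sq_abs (a 2 ω), sq_abs (e 2 ω),
      abs_nonneg (a 2 ω), abs_nonneg (e 2 ω)]
  have hIaabs : Integrable (fun ω => |a 2 ω|) μ := hIa.abs
  have hIeabs : Integrable (fun ω => |e 2 ω|) μ := hIe.abs
  set α := ∫ ω, |a 2 ω| ∂μ with hα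
  set β := ∫ ω, |e 2 ω| ∂μ with hβ
  have hα0 : 0 ≤ α := integral_nonneg fun ω => abs_nonneg _
  have hβ0 : 0 ≤ β := integral_nonneg fun ω => abs_nonneg _
  have hs0 : 0 ≤ s := hs ▸ integral_nonneg fun ω => sq_nonneg _
  have hα2 : α ^ 2 ≤ s := by
    have h1 : Integrable (fun ω => a 2 ω ^ 2 - 2 * α * |a 2 ω|) μ :=
      hL2a.sub (hIaabs.const_mul _)
    have h2 : 0 ≤ ∫ ω, (|a 2 ω| - α) ^ 2 ∂μ := integral_nonneg fun ω => sq_nonneg _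
    have h3 : (∫ ω, (|a 2 ω| - α) ^ 2 ∂μ)
        = ∫ ω, (a 2 ω ^ 2 - 2 * α * |a 2 ω| + α ^ 2) ∂μ := by
      refine integral_congr_ae (Filter.Eventually.of_forall fun ω => ?_)
      dsimp only; nlinarith [sq_abs (a 2 ω)]
    rw [h3, integral_add h1 (integrable_const _), integral_sub hL2a (hIaabs.const_mul _),
      integral_const_mul, integral_const] at h2
    simp only [probReal_univ, measure_univ, ENNReal.toReal_one, smul_eq_mul, one_mul] at h2
    rw [hs] at h2; nlinarith
  have hα1 : α < 1 := by nlinarith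
  have hmα : |m| ≤ α := by
    rw [← hm]
    calc |∫ ω, a 2 ω ∂μ| ≤ ∫ ω, |a 2 ω| ∂μ := by
          simpa [Real.norm_eq_abs] using norm_integral_le_integral_norm (μ := μ) (a 2)
      _ = α := rfl
  have hm1 : |m| < 1 := lt_of_le_of_lt hmα hα1
  -- generic independence product machinery
  have hGen : ∀ (F : ℕ → ℝ × ℝ → ℝ), (∀ k, Measurable (F k)) → ∀ (t : Finset ℕ),
      (∀ k ∈ t, 2 ≤ k) → (∀ k ∈ t, Integrable (fun ω => F k (a 2 ω, e 2 ω)) μ) →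
      Integrable (fun ω => ∏ k ∈ t, F k (a k ω, e k ω)) μ ∧
        (∫ ω, ∏ k ∈ t, F k (a k ω, e k ω) ∂μ)
          = ∏ k ∈ t, ∫ ω, F k (a 2 ω, e 2 ω) ∂μ := by
    intro F hF t ht hInt
    have hGmeas : ∀ k, Measurable fun ω => F k (a k ω, e k ω) := fun k =>
      (hF k).comp (hmeas k)
    have hGindep : iIndepFun (fun k ω => F k (a k ω, e k ω)) μ :=
      hindep.comp F hF
    have hid : ∀ k ∈ t, Integrable (fun ω => F k (a k ω, e k ω)) μ ∧
        (∫ ω, F k (a k ω, e k ω) ∂μ) = ∫ ω, F k (a 2 ω, e 2 ω) ∂μ := by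
      intro k hk
      have h := (hident k (ht k hk)).comp (hF k)
      exact ⟨h.integrable_iff.mpr (hInt k hk), h.integral_eq⟩
    obtain ⟨h1, h2⟩ := prod_indep_integral hGmeas hGindep t fun k hk => (hid k hk).1
    exact ⟨h1, h2.trans (Finset.prod_congr rfl fun k hk => (hid k hk).2)⟩
  -- the key moment computation
  have key : ∀ i j : ℕ, i ≤ j → Integrable (fun ω => X i ω * X j ω) μ ∧
      (∫ ω, X i ω * X j ω ∂μ)
        = if i = j then s ^ i * E2 else s ^ i * (c * (m ^ (j - i - 1) * mu)) := by
    intro i j hij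
    set F : ℕ → ℝ × ℝ → ℝ := fun k p =>
      if k < i + 2 then p.1 ^ 2 else if k = i + 2 then (if i = j then p.2 ^ 2 else p.1 * p.2)
      else if k = j + 2 then p.2 else p.1 with hF
    have hFmeas : ∀ k, Measurable (F k) := by
      intro k
      simp only [hF]
      split_ifs
      · exact measurable_fst.pow_const 2
      · exact measurable_snd.pow_const 2
      · exact measurable_fst.mul measurable_snd
      · exact measurable_snd
      · exact measurable_fst
    have hbase : ∀ k ∈ Finset.Ico 2 (j + 3), Integrable (fun ω => F k (a 2 ω, e 2 ω)) μ := by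
      intro k _
      simp only [hF]
      split_ifs
      exacts [hL2a, hL2e, hIae, hIe, hIa]
    obtain ⟨hint, hval⟩ := hGen F hFmeas (Finset.Ico 2 (j + 3))
      (fun k hk => (Finset.mem_Ico.mp hk).1) hbase
    rcases eq_or_lt_of_le hij with rfl | hlt
    · -- diagonal case
      have hprod : ∀ ω, X i ω * X i ω = ∏ k ∈ Finset.Ico 2 (i + 3), F k (a k ω, e k ω) := by
        intro ω
        rw [show Finset.Ico 2 (i + 3) = Finset.Ico 2 ((i + 2) + 1) from rfl,
          Finset.prod_Ico_succ_top (by omega : 2 ≤ i + 2)]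
        have h1 : ∏ k ∈ Finset.Ico 2 (i + 2), F k (a k ω, e k ω)
            = ∏ k ∈ Finset.Ico 2 (i + 2), a k ω ^ 2 := by
          refine Finset.prod_congr rfl fun k hk => ?_
          simp only [hF]; rw [if_pos (Finset.mem_Ico.mp hk).2]
        have h2 : F (i + 2) (a (i + 2) ω, e (i + 2) ω) = e (i + 2) ω ^ 2 := by
          simp [hF]
        rw [h1, h2, Finset.prod_pow]
        simp only [hXdef]; ring
      have hvals : ∀ k ∈ Finset.Ico 2 (i + 3), (∫ ω, F k (a 2 ω, e 2 ω) ∂μ)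
          = if k = i + 2 then E2 else s := by
        intro k hk
        have hk' := Finset.mem_Ico.mp hk
        by_cases h : k = i + 2
        · simp only [h]
          simp [hF, hE2]
        · have hlt2 : k < i + 2 := by omega
          simp [hF, hlt2, h]
          exact hs
      have h2 : ∏ k ∈ Finset.Ico 2 (i + 3), (if k = i + 2 then E2 else s) = s ^ i * E2 := by
        rw [show Finset.Ico 2 (i + 3) = Finset.Ico 2 ((i + 2) + 1) from rfl,
          Finset.prod_Ico_succ_top (by omega : 2 ≤ i + 2), if_pos rfl]
        have h3 : ∀ k ∈ Finset.Ico 2 (i + 2), (if k = i + 2 then E2 else s) = s :=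
          fun k hk => if_neg (by have := Finset.mem_Ico.mp hk; omega)
        rw [Finset.prod_congr rfl h3, Finset.prod_const, Nat.card_Ico,
          show i + 2 - 2 = i from by omega]
      refine ⟨hint.congr (Filter.Eventually.of_forall fun ω => (hprod ω).symm), ?_⟩
      rw [integral_congr_ae (Filter.Eventually.of_forall hprod), hval,
        Finset.prod_congr rfl hvals, h2, if_pos rfl]
    · -- off-diagonal case
      have hne : i ≠ j := Nat.ne_of_lt hlt
      have hprod : ∀ ω, X i ω * X j ω = ∏ k ∈ Finset.Ico 2 (j + 3), F k (a k ω, e k ω) := by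
        intro ω
        rw [← Finset.prod_Ico_consecutive _ (by omega : 2 ≤ i + 2) (by omega : i + 2 ≤ j + 3),
          Finset.prod_eq_prod_Ico_succ_bot (by omega : i + 2 < j + 3),
          show Finset.Ico (i + 2 + 1) (j + 3) = Finset.Ico (i + 3) ((j + 2) + 1) from rfl,
          Finset.prod_Ico_succ_top (by omega : i + 3 ≤ j + 2)]
        have h1 : ∏ k ∈ Finset.Ico 2 (i + 2), F k (a k ω, e k ω)
            = ∏ k ∈ Finset.Ico 2 (i + 2), a k ω ^ 2 := by
          refine Finset.prod_congr rfl fun k hk => ?_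
          simp only [hF]; rw [if_pos (Finset.mem_Ico.mp hk).2]
        have h2 : F (i + 2) (a (i + 2) ω, e (i + 2) ω) = a (i + 2) ω * e (i + 2) ω := by
          simp [hF, hne]
        have h3 : ∏ k ∈ Finset.Ico (i + 3) (j + 2), F k (a k ω, e k ω)
            = ∏ k ∈ Finset.Ico (i + 3) (j + 2), a k ω := by
          refine Finset.prod_congr rfl fun k hk => ?_
          have hk' := Finset.mem_Ico.mp hk
          simp [hF, show ¬ k < i + 2 from by omega, show k ≠ i + 2 from by omega,
            show k ≠ j + 2 from by omega]
        have h4 : F (j + 2) (a (j + 2) ω, e (j + 2) ω) = e (j + 2) ω := by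
          simp [hF, show ¬ j + 2 < i + 2 from by omega, show j + 2 ≠ i + 2 from by omega, hne.symm]
        rw [h1, h2, h3, h4, Finset.prod_pow]
        simp only [hXdef]
        rw [show (∏ k ∈ Finset.Ico 2 (j + 2), a k ω)
            = (∏ k ∈ Finset.Ico 2 (i + 2), a k ω)
              * (a (i + 2) ω * ∏ k ∈ Finset.Ico (i + 3) (j + 2), a k ω) from by
          rw [← Finset.prod_Ico_consecutive _ (by omega : 2 ≤ i + 2) (by omega : i + 2 ≤ j + 2),
            Finset.prod_eq_prod_Ico_succ_bot (by omega : i + 2 < j + 2)]]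
        ring
      have hvals : ∀ k ∈ Finset.Ico 2 (j + 3), (∫ ω, F k (a 2 ω, e 2 ω) ∂μ)
          = if k < i + 2 then s else if k = i + 2 then c else if k = j + 2 then mu else m := by
        intro k hk
        by_cases h1 : k < i + 2
        · simp [hF, h1]; exact hs
        · by_cases h2 : k = i + 2
          · simp only [h2]
            simp [hF, hne]
            exact hc
          · by_cases h3 : k = j + 2
            · simp only [h3]
              simp [hF, show ¬ j + 2 < i + 2 from by omega, show j + 2 ≠ i + 2 from by omega, hne.symm]
              exact hmu
            · simp [hF, h1, h2, h3]; exact hm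
      have hval2 : ∏ k ∈ Finset.Ico 2 (j + 3),
          (if k < i + 2 then s else if k = i + 2 then c else if k = j + 2 then mu else m)
          = s ^ i * (c * (m ^ (j - i - 1) * mu)) := by
        rw [← Finset.prod_Ico_consecutive _ (by omega : 2 ≤ i + 2) (by omega : i + 2 ≤ j + 3),
          Finset.prod_eq_prod_Ico_succ_bot (by omega : i + 2 < j + 3),
          show Finset.Ico (i + 2 + 1) (j + 3) = Finset.Ico (i + 3) ((j + 2) + 1) from rfl,
          Finset.prod_Ico_succ_top (by omega : i + 3 ≤ j + 2)]
        have p1 : ∏ k ∈ Finset.Ico 2 (i + 2),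
            (if k < i + 2 then s else if k = i + 2 then c else if k = j + 2 then mu else m)
            = s ^ i := by
          rw [Finset.prod_congr rfl (fun k hk => if_pos (Finset.mem_Ico.mp hk).2),
            Finset.prod_const, Nat.card_Ico, show i + 2 - 2 = i from by omega]
        have p2 : (if i + 2 < i + 2 then s else if i + 2 = i + 2 then c
            else if i + 2 = j + 2 then mu else m) = c := by
          simp [show ¬ i + 2 < i + 2 from by omega, show i + 2 ≠ j + 2 from by omega]
        have p3 : ∏ k ∈ Finset.Ico (i + 3) (j + 2),
            (if k < i + 2 then s else if k = i + 2 then c else if k = j + 2 then mu else m)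
            = m ^ (j - i - 1) := by
          have h3 : ∀ k ∈ Finset.Ico (i + 3) (j + 2),
              (if k < i + 2 then s else if k = i + 2 then c else if k = j + 2 then mu else m)
              = m := by
            intro k hk
            have hk' := Finset.mem_Ico.mp hk
            rw [if_neg (by omega), if_neg (by omega), if_neg (by omega)]
          rw [Finset.prod_congr rfl h3, Finset.prod_const, Nat.card_Ico,
            show j + 2 - (i + 3) = j - i - 1 from by omega]
        have p4 : (if j + 2 < i + 2 then s else if j + 2 = i + 2 then c
            else if j + 2 = j + 2 then mu else m) = mu := by
          simp [show ¬ j + 2 < i + 2 from by omega, show j + 2 ≠ i + 2 from by omega, hne.symm]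
        rw [p1, p2, p3, p4]
      refine ⟨hint.congr (Filter.Eventually.of_forall fun ω => (hprod ω).symm), ?_⟩
      rw [integral_congr_ae (Filter.Eventually.of_forall hprod), hval,
        Finset.prod_congr rfl hvals, hval2]
      rw [if_neg hne]
  -- the abs computation
  have keyAbs : ∀ i : ℕ, Integrable (fun ω => |X i ω|) μ ∧
      (∫ ω, |X i ω| ∂μ) = α ^ i * β := by
    intro i
    set F : ℕ → ℝ × ℝ → ℝ := fun k p => if k = i + 2 then |p.2| else |p.1| with hF
    have hFmeas : ∀ k, Measurable (F k) := by
      intro k; simp only [hF]; split_ifs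
      · exact measurable_snd.abs
      · exact measurable_fst.abs
    have hbase : ∀ k ∈ Finset.Ico 2 (i + 3), Integrable (fun ω => F k (a 2 ω, e 2 ω)) μ := by
      intro k _; simp only [hF]; split_ifs
      exacts [hIeabs, hIaabs]
    obtain ⟨hint, hval⟩ := hGen F hFmeas (Finset.Ico 2 (i + 3))
      (fun k hk => (Finset.mem_Ico.mp hk).1) hbase
    have hprod : ∀ ω, |X i ω| = ∏ k ∈ Finset.Ico 2 (i + 3), F k (a k ω, e k ω) := by
      intro ω
      rw [show Finset.Ico 2 (i + 3) = Finset.Ico 2 ((i + 2) + 1) from rfl,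
        Finset.prod_Ico_succ_top (by omega : 2 ≤ i + 2)]
      have h1 : ∏ k ∈ Finset.Ico 2 (i + 2), F k (a k ω, e k ω)
          = ∏ k ∈ Finset.Ico 2 (i + 2), |a k ω| := by
        refine Finset.prod_congr rfl fun k hk => ?_
        have := Finset.mem_Ico.mp hk
        simp [hF, show k ≠ i + 2 from by omega]
      have h2 : F (i + 2) (a (i + 2) ω, e (i + 2) ω) = |e (i + 2) ω| := by simp [hF]
      rw [h1, h2]
      simp only [hXdef]
      rw [abs_mul, Finset.abs_prod]
    have hvals : ∀ k ∈ Finset.Ico 2 (i + 3), (∫ ω, F k (a 2 ω, e 2 ω) ∂μ)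
        = if k = i + 2 then β else α := by
      intro k hk
      by_cases h : k = i + 2
      · simp only [h]; simp [hF, hβ]
      · simp [hF, h, hα]
    have h2 : ∏ k ∈ Finset.Ico 2 (i + 3), (if k = i + 2 then β else α) = α ^ i * β := by
      rw [show Finset.Ico 2 (i + 3) = Finset.Ico 2 ((i + 2) + 1) from rfl,
        Finset.prod_Ico_succ_top (by omega : 2 ≤ i + 2), if_pos rfl,
        Finset.prod_congr rfl (fun k hk => if_neg (by have := Finset.mem_Ico.mp hk; omega)),
        Finset.prod_const, Nat.card_Ico, show i + 2 - 2 = i from by omega]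
    refine ⟨hint.congr (Filter.Eventually.of_forall fun ω => (hprod ω).symm), ?_⟩
    rw [integral_congr_ae (Filter.Eventually.of_forall hprod), hval,
      Finset.prod_congr rfl hvals, h2]
  -- summability of the L¹ norms
  have hsummab : Summable (fun i : ℕ => α ^ i * β) :=
    (summable_geometric_of_lt_one hα0 hα1).mul_right β
  have hXint : ∀ i, Integrable (X i) μ := by
    intro i
    refine (keyAbs i).1.mono' (hXmea i).aestronglyMeasurable ?_
    exact Filter.Eventually.of_forall fun ω => by simp [Real.norm_eq_abs]
  have haesum : ∀ᵐ ω ∂μ, Summable fun i => X i ω := by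
    have heach : ∀ i, (∫⁻ ω, (‖X i ω‖₊ : ENNReal) ∂μ) = ENNReal.ofReal (α ^ i * β) := by
      intro i
      rw [show (∫⁻ ω, (‖X i ω‖₊ : ENNReal) ∂μ) = ∫⁻ ω, ‖X i ω‖ₑ ∂μ from rfl,
        ← ofReal_integral_norm_eq_lintegral_enorm (hXint i), ← (keyAbs i).2]
      simp [Real.norm_eq_abs]
    have hlt : (∫⁻ ω, ∑' i, (‖X i ω‖₊ : ENNReal) ∂μ) ≠ ⊤ := by
      rw [lintegral_tsum fun i => ((hXmea i).nnnorm.coe_nnreal_ennreal).aemeasurable,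
        tsum_congr heach, ← ENNReal.ofReal_tsum_of_nonneg
          (fun i => mul_nonneg (pow_nonneg hα0 i) hβ0) hsummab]
      exact ENNReal.ofReal_ne_top
    have hmeasT : Measurable fun ω => ∑' i, (‖X i ω‖₊ : ENNReal) :=
      Measurable.ennreal_tsum fun i => (hXmea i).nnnorm.coe_nnreal_ennreal
    filter_upwards [ae_lt_top hmeasT hlt] with ω hω
    have h1 : Summable fun i => ‖X i ω‖₊ := ENNReal.tsum_coe_ne_top_iff_summable.mp hω.ne
    refine Summable.of_norm ?_
    have h2 := NNReal.summable_coe.mpr h1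
    simpa [coe_nnnorm] using h2
  -- partial sums
  set Sn : ℕ → Ω → ℝ := fun n ω => ∑ k ∈ Finset.range n, X k ω with hSn
  have hSnmeas : ∀ n, Measurable (Sn n) := fun n => Finset.measurable_sum _ fun i _ => hXmea i
  have keyInt : ∀ i j : ℕ, Integrable (fun ω => X i ω * X j ω) μ := by
    intro i j
    rcases le_total i j with h | h
    · exact (key i j h).1
    · exact (key j i h).1.congr (Filter.Eventually.of_forall fun ω => mul_comm _ _)
  set A : ℕ × ℕ → ℝ := fun p => ∫ ω, X p.1 ω * X p.2 ω ∂μ with hA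
  have hsnorm : ‖s‖ < 1 := by rw [Real.norm_eq_abs, abs_of_nonneg hs0]; exact hslt
  have hmnorm : ‖m‖ < 1 := by rw [Real.norm_eq_abs]; exact hm1
  set D : ℕ × ℕ → ℝ := fun p => if p.1 = p.2 then s ^ p.1 * E2 else 0 with hD
  set U : ℕ × ℕ → ℝ := fun p =>
    if p.1 < p.2 then s ^ p.1 * (c * (m ^ (p.2 - p.1 - 1) * mu)) else 0 with hU
  have hDsum : HasSum D ((1 - s)⁻¹ * E2) := by
    have h1 : HasSum (fun n : ℕ => s ^ n * E2) ((1 - s)⁻¹ * E2) :=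
      (hasSum_geometric_of_norm_lt_one hsnorm).mul_right E2
    have hinj : Function.Injective (fun n : ℕ => ((n, n) : ℕ × ℕ)) := by
      intro x y h; exact congrArg Prod.fst h
    refine (hinj.hasSum_iff ?_).mp (h1.congr_fun fun n => by simp [hD])
    intro p hp
    have hne : p.1 ≠ p.2 := by
      intro hc2
      exact hp ⟨p.1, by cases p; simp_all⟩
    simp [hD, hne]
  have hUsum : HasSum U ((1 - s)⁻¹ * (c * ((1 - m)⁻¹ * mu))) := by
    have hsg : Summable fun n : ℕ => ‖s ^ n‖ := by
      have h0 : Summable (fun n : ℕ => ‖s‖ ^ n) :=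
        summable_geometric_of_lt_one (norm_nonneg s) hsnorm
      exact h0.congr fun n => (norm_pow _ _).symm
    have hgg : Summable fun n : ℕ => ‖c * (m ^ n * mu)‖ := by
      have h0 : Summable (fun n : ℕ => |c| * |mu| * |m| ^ n) :=
        (summable_geometric_of_lt_one (abs_nonneg m) hm1).mul_left _
      refine h0.congr fun n => ?_
      simp only [Real.norm_eq_abs, abs_mul, abs_pow]
      ring
    have hmul : Summable fun q : ℕ × ℕ => s ^ q.1 * (c * (m ^ q.2 * mu)) :=
      summable_mul_of_summable_norm hsg hgg
    have hvalq : (∑' q : ℕ × ℕ, s ^ q.1 * (c * (m ^ q.2 * mu)))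
        = (1 - s)⁻¹ * (c * ((1 - m)⁻¹ * mu)) := by
      rw [← tsum_mul_tsum_of_summable_norm hsg hgg, tsum_geometric_of_norm_lt_one hsnorm,
        tsum_mul_left, tsum_mul_right, tsum_geometric_of_norm_lt_one hmnorm]
    have hq : HasSum (fun q : ℕ × ℕ => s ^ q.1 * (c * (m ^ q.2 * mu)))
        ((1 - s)⁻¹ * (c * ((1 - m)⁻¹ * mu))) := hvalq ▸ hmul.hasSum
    have hinj : Function.Injective (fun q : ℕ × ℕ => ((q.1, q.1 + 1 + q.2) : ℕ × ℕ)) := by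
      intro x y h
      simp only [Prod.mk.injEq] at h
      obtain ⟨h1, h2⟩ := h
      exact Prod.ext_iff.mpr ⟨h1, by omega⟩
    refine (hinj.hasSum_iff ?_).mp (hq.congr_fun fun q => ?_)
    · intro p hp
      have hnlt : ¬ p.1 < p.2 := by
        intro hlt2
        refine hp ⟨(p.1, p.2 - p.1 - 1), ?_⟩
        refine Prod.ext_iff.mpr ⟨rfl, ?_⟩
        show p.1 + 1 + (p.2 - p.1 - 1) = p.2
        omega
      simp [hU, hnlt]
    · simp [hU, show q.1 < q.1 + 1 + q.2 from by omega,
        show q.1 + 1 + q.2 - q.1 - 1 = q.2 from by omega]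
  have hUswap : HasSum (fun p : ℕ × ℕ => U p.swap) ((1 - s)⁻¹ * (c * ((1 - m)⁻¹ * mu))) :=
    ((Equiv.prodComm ℕ ℕ).hasSum_iff).mpr hUsum
  have hAform : ∀ p : ℕ × ℕ, A p = D p + (U p + U p.swap) := by
    intro p
    rcases lt_trichotomy p.1 p.2 with h | h | h
    · have hk := (key p.1 p.2 (le_of_lt h)).2
      have hne : p.1 ≠ p.2 := Nat.ne_of_lt h
      simp only [hA]
      rw [hk, if_neg hne]
      simp [hD, hU, hne, h, show ¬ p.2 < p.1 from by omega]
    · have hk := (key p.1 p.2 (le_of_eq h)).2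
      simp only [hA]
      rw [hk, if_pos h]
      simp [hD, hU, h]
    · have hk := (key p.2 p.1 (le_of_lt h)).2
      have hne : p.2 ≠ p.1 := Nat.ne_of_lt h
      have hcomm : (∫ ω, X p.1 ω * X p.2 ω ∂μ) = ∫ ω, X p.2 ω * X p.1 ω ∂μ :=
        integral_congr_ae (Filter.Eventually.of_forall fun ω => mul_comm _ _)
      simp only [hA]
      rw [hcomm, hk, if_neg hne]
      simp [hD, hU, h, show p.1 ≠ p.2 from by omega, show ¬ p.1 < p.2 from by omega]
  have hAsum : HasSum A ((1 - s)⁻¹ * E2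
      + ((1 - s)⁻¹ * (c * ((1 - m)⁻¹ * mu)) + (1 - s)⁻¹ * (c * ((1 - m)⁻¹ * mu)))) :=
    (hDsum.add (hUsum.add hUswap)).congr_fun fun p => hAform p
  have hAabs : Summable fun p : ℕ × ℕ => |A p| := hAsum.summable.abs
  set B' : ℝ := ∑' p : ℕ × ℕ, |A p| with hB'
  have hB'0 : 0 ≤ B' := tsum_nonneg fun p => abs_nonneg _
  have hFle : ∀ Fs : Finset (ℕ × ℕ), ∑ p ∈ Fs, |A p| ≤ B' := fun Fs =>
    hAabs.sum_le_tsum Fs (fun p _ => abs_nonneg _)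
  have hsq_mono : Monotone fun n : ℕ => Finset.range n ×ˢ Finset.range n := by
    intro n k h
    exact Finset.product_subset_product (Finset.range_subset_range.mpr h) (Finset.range_subset_range.mpr h)
  have hsq_tendsto : Filter.Tendsto (fun n => Finset.range n ×ˢ Finset.range n)
      Filter.atTop Filter.atTop := by
    refine tendsto_atTop_finset_of_monotone hsq_mono fun p => ?_
    exact ⟨max p.1 p.2 + 1, Finset.mem_product.mpr
      ⟨Finset.mem_range.mpr (by omega), Finset.mem_range.mpr (by omega)⟩⟩
  have hSA : Filter.Tendsto (fun n => ∑ p ∈ Finset.range n ×ˢ Finset.range n, A p)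
      Filter.atTop (𝓝 ((1 - s)⁻¹ * E2
        + ((1 - s)⁻¹ * (c * ((1 - m)⁻¹ * mu)) + (1 - s)⁻¹ * (c * ((1 - m)⁻¹ * mu))))) :=
    hAsum.comp hsq_tendsto
  have hSabs : Filter.Tendsto (fun n => ∑ p ∈ Finset.range n ×ˢ Finset.range n, |A p|)
      Filter.atTop (𝓝 B') := hAabs.hasSum.comp hsq_tendsto
  have hSnsq_eq : ∀ n ω, Sn n ω ^ 2
      = ∑ p ∈ Finset.range n ×ˢ Finset.range n, X p.1 ω * X p.2 ω := by
    intro n ω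
    rw [Finset.sum_product]
    simp only [hSn]
    rw [sq, Finset.sum_mul_sum]
  have hSn2int : ∀ n, Integrable (fun ω => Sn n ω ^ 2) μ := by
    intro n
    rw [show (fun ω => Sn n ω ^ 2)
      = fun ω => ∑ p ∈ Finset.range n ×ˢ Finset.range n, X p.1 ω * X p.2 ω
      from funext fun ω => hSnsq_eq n ω]
    exact integrable_finset_sum _ fun p _ => keyInt p.1 p.2
  have hSnsqval : ∀ n, (∫ ω, Sn n ω ^ 2 ∂μ)
      = ∑ p ∈ Finset.range n ×ˢ Finset.range n, A p := by
    intro n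
    rw [integral_congr_ae (Filter.Eventually.of_forall (hSnsq_eq n))]
    exact integral_finset_sum _ fun p _ => keyInt p.1 p.2
  have hSnB : ∀ n, (∫ ω, Sn n ω ^ 2 ∂μ) ≤ B' := by
    intro n
    rw [hSnsqval n]
    exact le_trans (Finset.sum_le_sum fun p _ => le_abs_self _) (hFle _)
  set tn : ℕ → ℝ := fun n => B' - ∑ p ∈ Finset.range n ×ˢ Finset.range n, |A p| with htn
  have htn0 : ∀ n, 0 ≤ tn n := fun n => sub_nonneg.mpr (hFle _)
  have htnlim : Filter.Tendsto tn Filter.atTop (𝓝 0) := by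
    have h1 := (tendsto_const_nhds (x := B') (f := Filter.atTop (α := ℕ))).sub hSabs
    simpa using h1
  have hIcoSq : ∀ n M, ∑ p ∈ Finset.Ico n M ×ˢ Finset.Ico n M, A p ≤ tn n := by
    intro n M
    by_cases hnM : n ≤ M
    · have hsub : Finset.Ico n M ×ˢ Finset.Ico n M
          ⊆ (Finset.range M ×ˢ Finset.range M) \ (Finset.range n ×ˢ Finset.range n) := by
        intro p hp
        simp only [Finset.mem_product, Finset.mem_Ico, Finset.mem_sdiff,
          Finset.mem_range] at *
        omega
      calc ∑ p ∈ Finset.Ico n M ×ˢ Finset.Ico n M, A p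
          ≤ ∑ p ∈ Finset.Ico n M ×ˢ Finset.Ico n M, |A p| :=
            Finset.sum_le_sum fun p _ => le_abs_self _
        _ ≤ ∑ p ∈ (Finset.range M ×ˢ Finset.range M) \ (Finset.range n ×ˢ Finset.range n),
              |A p| :=
            Finset.sum_le_sum_of_subset_of_nonneg hsub fun p _ _ => abs_nonneg _
        _ = ∑ p ∈ Finset.range M ×ˢ Finset.range M, |A p|
            - ∑ p ∈ Finset.range n ×ˢ Finset.range n, |A p| :=
            Finset.sum_sdiff_eq_sub (hsq_mono hnM)
        _ ≤ tn n := by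
            have h1 := hFle (Finset.range M ×ˢ Finset.range M)
            simp only [htn]
            linarith
    · rw [Finset.Ico_eq_empty (by omega)]
      simpa using htn0 n
  have haetendsto : ∀ᵐ ω ∂μ, Filter.Tendsto (fun n => Sn n ω) Filter.atTop (𝓝 (T ω)) := by
    filter_upwards [haesum] with ω hω
    rw [hT ω]
    exact hω.hasSum.tendsto_sum_nat
  have hTaesm : AEStronglyMeasurable T μ :=
    aestronglyMeasurable_of_tendsto_ae Filter.atTop
      (fun n => (hSnmeas n).aestronglyMeasurable) haetendsto
  have hTSnint : ∀ n, Integrable (fun ω => T ω * Sn n ω) μ := by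
    intro n
    refine (hTL2.add (hSn2int n)).mono' (hTaesm.mul (hSnmeas n).aestronglyMeasurable) ?_
    refine Filter.Eventually.of_forall fun ω => ?_
    simp only [Real.norm_eq_abs, abs_mul, Pi.add_apply]
    nlinarith [sq_nonneg (|T ω| - |Sn n ω|), sq_abs (T ω), sq_abs (Sn n ω),
      abs_nonneg (T ω), abs_nonneg (Sn n ω)]
  have hRn2int : ∀ n, Integrable (fun ω => (T ω - Sn n ω) ^ 2) μ := by
    intro n
    refine ((hTL2.add (hSn2int n)).sub ((hTSnint n).const_mul 2)).congr
      (Filter.Eventually.of_forall fun ω => ?_)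
    simp only [Pi.add_apply, Pi.sub_apply]
    ring
  have hSnRnint : ∀ n, Integrable (fun ω => Sn n ω * (T ω - Sn n ω)) μ := by
    intro n
    refine ((hTSnint n).sub (hSn2int n)).congr (Filter.Eventually.of_forall fun ω => ?_)
    simp only [Pi.sub_apply]
    ring
  have hdecomp : ∀ n, (∫ ω, T ω ^ 2 ∂μ) = (∫ ω, Sn n ω ^ 2 ∂μ)
      + 2 * (∫ ω, Sn n ω * (T ω - Sn n ω) ∂μ) + (∫ ω, (T ω - Sn n ω) ^ 2 ∂μ) := by
    intro n
    have h0 : ∀ ω, T ω ^ 2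
        = Sn n ω ^ 2 + 2 * (Sn n ω * (T ω - Sn n ω)) + (T ω - Sn n ω) ^ 2 :=
      fun ω => by ring
    have i1 : Integrable (fun ω => 2 * (Sn n ω * (T ω - Sn n ω))) μ := (hSnRnint n).const_mul 2
    have i2 : Integrable (fun ω => Sn n ω ^ 2 + 2 * (Sn n ω * (T ω - Sn n ω))) μ :=
      (hSn2int n).add i1
    rw [integral_congr_ae (Filter.Eventually.of_forall h0),
      integral_add i2 (hRn2int n), integral_add (hSn2int n) i1, integral_const_mul]
  have hRn2le : ∀ n, (∫ ω, (T ω - Sn n ω) ^ 2 ∂μ) ≤ tn n := by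
    intro n
    have hgeq : ∀ M ω, (∑ i ∈ Finset.Ico n M, X i ω) ^ 2
        = ∑ p ∈ Finset.Ico n M ×ˢ Finset.Ico n M, X p.1 ω * X p.2 ω := by
      intro M ω
      rw [Finset.sum_product, sq, Finset.sum_mul_sum]
    have hgint : ∀ M, Integrable (fun ω => (∑ i ∈ Finset.Ico n M, X i ω) ^ 2) μ := by
      intro M
      rw [show (fun ω => (∑ i ∈ Finset.Ico n M, X i ω) ^ 2) = fun ω =>
        ∑ p ∈ Finset.Ico n M ×ˢ Finset.Ico n M, X p.1 ω * X p.2 ω from funext (hgeq M)]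
      exact integrable_finset_sum _ fun p _ => keyInt p.1 p.2
    have hgval : ∀ M, (∫ ω, (∑ i ∈ Finset.Ico n M, X i ω) ^ 2 ∂μ) ≤ tn n := by
      intro M
      rw [integral_congr_ae (Filter.Eventually.of_forall (hgeq M)),
        integral_finset_sum _ fun p _ => keyInt p.1 p.2]
      exact hIcoSq n M
    have hgtend : ∀ᵐ ω ∂μ, Filter.Tendsto (fun M => (∑ i ∈ Finset.Ico n M, X i ω) ^ 2)
        Filter.atTop (𝓝 ((T ω - Sn n ω) ^ 2)) := by
      filter_upwards [haetendsto] with ω hω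
      have h2 := hω.sub (tendsto_const_nhds (x := Sn n ω))
      have h1 : Filter.Tendsto (fun M => ∑ i ∈ Finset.Ico n M, X i ω)
          Filter.atTop (𝓝 (T ω - Sn n ω)) := by
        refine Filter.Tendsto.congr' ?_ h2
        filter_upwards [Filter.eventually_ge_atTop n] with M hM
        exact (Finset.sum_Ico_eq_sub _ hM).symm
      exact h1.pow 2
    have e1 : ENNReal.ofReal (∫ ω, (T ω - Sn n ω) ^ 2 ∂μ)
        = ∫⁻ ω, ENNReal.ofReal ((T ω - Sn n ω) ^ 2) ∂μ :=
      ofReal_integral_eq_lintegral_ofReal (hRn2int n)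
        (Filter.Eventually.of_forall fun ω => sq_nonneg _)
    have e2 : (∫⁻ ω, ENNReal.ofReal ((T ω - Sn n ω) ^ 2) ∂μ)
        ≤ Filter.liminf (fun M => ∫⁻ ω,
            ENNReal.ofReal ((∑ i ∈ Finset.Ico n M, X i ω) ^ 2) ∂μ) Filter.atTop := by
      have heq : (∫⁻ ω, ENNReal.ofReal ((T ω - Sn n ω) ^ 2) ∂μ)
          = ∫⁻ ω, Filter.liminf
            (fun M => ENNReal.ofReal ((∑ i ∈ Finset.Ico n M, X i ω) ^ 2)) Filter.atTop ∂μ := by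
        refine lintegral_congr_ae ?_
        filter_upwards [hgtend] with ω hω
        exact (((ENNReal.continuous_ofReal.tendsto _).comp hω).liminf_eq).symm
      rw [heq]
      exact lintegral_liminf_le fun M =>
        ENNReal.measurable_ofReal.comp
          ((Finset.measurable_sum _ fun i _ => hXmea i).pow_const 2)
    have e3 : Filter.liminf (fun M => ∫⁻ ω,
        ENNReal.ofReal ((∑ i ∈ Finset.Ico n M, X i ω) ^ 2) ∂μ) Filter.atTop
        ≤ ENNReal.ofReal (tn n) := by
      have hb : ∀ M, (∫⁻ ω, ENNReal.ofReal ((∑ i ∈ Finset.Ico n M, X i ω) ^ 2) ∂μ)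
          ≤ ENNReal.ofReal (tn n) := by
        intro M
        rw [← ofReal_integral_eq_lintegral_ofReal (hgint M)
          (Filter.Eventually.of_forall fun ω => sq_nonneg _)]
        exact ENNReal.ofReal_le_ofReal (hgval M)
      calc Filter.liminf (fun M => ∫⁻ ω,
            ENNReal.ofReal ((∑ i ∈ Finset.Ico n M, X i ω) ^ 2) ∂μ) Filter.atTop
          ≤ Filter.liminf (fun _ : ℕ => ENNReal.ofReal (tn n)) Filter.atTop :=
            Filter.liminf_le_liminf (Filter.Eventually.of_forall hb)
        _ = ENNReal.ofReal (tn n) := Filter.liminf_const _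
    have e4 := e1 ▸ (e2.trans e3)
    exact (ENNReal.ofReal_le_ofReal_iff (htn0 n)).mp e4
  have hcs : ∀ n, (∫ ω, Sn n ω * (T ω - Sn n ω) ∂μ) ^ 2 ≤ B' * tn n := by
    intro n
    have h1 := integral_cs μ (hSn2int n) (hRn2int n) (hSnRnint n)
    have h2 : (∫ ω, Sn n ω ^ 2 ∂μ) * (∫ ω, (T ω - Sn n ω) ^ 2 ∂μ) ≤ B' * tn n :=
      mul_le_mul (hSnB n) (hRn2le n) (integral_nonneg fun ω => sq_nonneg _) hB'0
    exact h1.trans h2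
  have hcross : Filter.Tendsto (fun n => ∫ ω, Sn n ω * (T ω - Sn n ω) ∂μ)
      Filter.atTop (𝓝 0) := by
    have habs2 : ∀ n, |∫ ω, Sn n ω * (T ω - Sn n ω) ∂μ| ≤ Real.sqrt (B' * tn n) :=
      fun n => Real.abs_le_sqrt (hcs n)
    have hsqr : Filter.Tendsto (fun n => Real.sqrt (B' * tn n)) Filter.atTop (𝓝 0) := by
      have h1 : Filter.Tendsto (fun n => B' * tn n) Filter.atTop (𝓝 0) := by
        simpa using htnlim.const_mul B'
      have h2 := (Real.continuous_sqrt.tendsto 0).comp h1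
      simpa [Function.comp_def] using h2
    refine tendsto_of_tendsto_of_tendsto_of_le_of_le ?_ hsqr
      (fun n => (abs_le.mp (habs2 n)).1) (fun n => (abs_le.mp (habs2 n)).2)
    simpa using hsqr.neg
  have hRlim : Filter.Tendsto (fun n => ∫ ω, (T ω - Sn n ω) ^ 2 ∂μ) Filter.atTop (𝓝 0) :=
    squeeze_zero (fun n => integral_nonneg fun ω => sq_nonneg _) hRn2le htnlim
  have hSlim : Filter.Tendsto (fun n => ∫ ω, Sn n ω ^ 2 ∂μ) Filter.atTop
      (𝓝 ((1 - s)⁻¹ * E2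
        + ((1 - s)⁻¹ * (c * ((1 - m)⁻¹ * mu)) + (1 - s)⁻¹ * (c * ((1 - m)⁻¹ * mu))))) := by
    rw [show (fun n => ∫ ω, Sn n ω ^ 2 ∂μ)
      = fun n => ∑ p ∈ Finset.range n ×ˢ Finset.range n, A p from funext hSnsqval]
    exact hSA
  have hfinal : Filter.Tendsto (fun _ : ℕ => ∫ ω, T ω ^ 2 ∂μ) Filter.atTop
      (𝓝 (((1 - s)⁻¹ * E2
        + ((1 - s)⁻¹ * (c * ((1 - m)⁻¹ * mu)) + (1 - s)⁻¹ * (c * ((1 - m)⁻¹ * mu))))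
        + 2 * 0 + 0)) := by
    have h1 := (hSlim.add (hcross.const_mul 2)).add hRlim
    exact h1.congr fun n => (hdecomp n).symm
  have hTval := tendsto_nhds_unique tendsto_const_nhds hfinal
  rw [hTval]
  have h1s : (1 : ℝ) - s ≠ 0 := ne_of_gt (by linarith)
  have h1m : (1 : ℝ) - m ≠ 0 := by
    have := abs_lt.mp hm1
    exact ne_of_gt (by linarith)
  field_simp
  ring_nf
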